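/- Let A be a primitive axial algebra of Jordan type η over a field F with char F ≠ 2, generated by a closed set 𝒜 of η-axes. Then A is spanned over F by 𝒜. -/

import Mathlib

universe u v

section Prelim

variable (F : Type u) {A : Type v} [Field F] [NonUnitalNonAssocCommRing A]
  [Module F A] [SMulCommClass F A A] [IsScalarTower F A A]

/-- The λ-eigenspace of the adjoint map `ad_a : x ↦ a * x`. -/
def eigSp (a : A) (l : F) : Submodule F A where
  carrier := {x | a * x = l • x}
  add_mem' := by
    intro x y hx hy
    simp only [Set.mem_setOf_eq] at *
    rw [mul_add, hx, hy, smul_add]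
  zero_mem' := by simp
  smul_mem' := by
    intro c x hx
    simp only [Set.mem_setOf_eq] at *
    rw [mul_smul_comm, hx, smul_smul, smul_smul, mul_comm]

/-- `a` is a (primitive) `η`-axis. -/
structure IsAxis (η : F) (a : A) : Prop where
  ne_zero : a ≠ 0
  idem : a * a = a
  decomp : eigSp F a 1 ⊔ eigSp F a 0 ⊔ eigSp F a η = ⊤
  prim : eigSp F a 1 = Submodule.span F {a}
  f11 : ∀ x ∈ eigSp F a 1, ∀ y ∈ eigSp F a 1, x * y ∈ eigSp F a 1
  f00 : ∀ x ∈ eigSp F a 0, ∀ y ∈ eigSp F a 0, x * y ∈ eigSp F a 0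
  f10 : ∀ x ∈ eigSp F a 1, ∀ y ∈ eigSp F a 0, x * y = 0
  fpe : ∀ x ∈ eigSp F a 1 ⊔ eigSp F a 0, ∀ y ∈ eigSp F a η, x * y ∈ eigSp F a η
  fee : ∀ x ∈ eigSp F a η, ∀ y ∈ eigSp F a η, x * y ∈ eigSp F a 1 ⊔ eigSp F a 0

/-- `τ` is the Miyamoto involution of the `η`-axis `a`. -/
structure IsMiyamoto (η : F) (a : A) (τ : A → A) : Prop where
  fixes : ∀ x ∈ eigSp F a 1 ⊔ eigSp F a 0, τ x = x
  negates : ∀ x ∈ eigSp F a η, τ x = -x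
  map_add : ∀ x y : A, τ (x + y) = τ x + τ y
  map_smul : ∀ (c : F) (x : A), τ (c • x) = c • τ x
  map_mul : ∀ x y : A, τ (x * y) = τ x * τ y
  bijective : Function.Bijective τ

/-- `c = φ_a(u)`, the projection of `u` to `F·a` w.r.t. the axis `a`. -/
def IsProjCoeff (η : F) (a u : A) (c : F) : Prop :=
  ∃ u0 ∈ eigSp F a 0, ∃ ue ∈ eigSp F a η, u = c • a + u0 + ue

/-- `e` is an identity element of the subalgebra `N`. -/
def IsIdentOf (N : NonUnitalSubalgebra F A) (e : A) : Prop :=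
  e ∈ N ∧ ∀ z ∈ N, e * z = z

/-- `ψ` is an `F`-algebra automorphism of `A`. -/
structure IsAlgAut (ψ : A → A) : Prop where
  map_add : ∀ x y : A, ψ (x + y) = ψ x + ψ y
  map_smul : ∀ (c : F) (x : A), ψ (c • x) = c • ψ x
  map_mul : ∀ x y : A, ψ (x * y) = ψ x * ψ y
  bijective : Function.Bijective ψ

/-- The graph `Δ_𝒜`: distinct axes are adjacent iff their product is nonzero. -/
def axesGraph (𝒜 : Set A) : SimpleGraph 𝒜 where
  Adj x y := x ≠ y ∧ (x : A) * (y : A) ≠ 0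
  symm := ⟨by
    rintro x y ⟨hxy, hm⟩
    exact ⟨hxy.symm, by rwa [mul_comm]⟩⟩
  loopless := ⟨by rintro x ⟨h, -⟩; exact h rfl⟩

/-- Multiplication of the Jordan algebra of Clifford type `J(V,B) = F·e ⊕ V`. -/
def cliffMul {V : Type*} [AddCommGroup V] [Module F V]
    (B : V →ₗ[F] V →ₗ[F] F) (x y : F × V) : F × V :=
  (x.1 * y.1 + B x.2 y.2, x.1 • y.2 + y.1 • x.2)

end Prelim

/-- An isomorphism of `A` with a Jordan algebra of Clifford type `J(V,B)`. -/
structure CliffordTypeIso (F : Type u) (A : Type v) [Field F]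
    [NonUnitalNonAssocCommRing A] [Module F A] [SMulCommClass F A A]
    [IsScalarTower F A A] where
  V : Type v
  [instAdd : AddCommGroup V]
  [instMod : Module F V]
  B : V →ₗ[F] V →ₗ[F] F
  symm : ∀ v w : V, B v w = B w v
  iso : A ≃ₗ[F] F × V
  mul_compat : ∀ x y : A, iso (x * y) = cliffMul F B (iso x) (iso y)
section AuxProof

variable {F : Type u} {A : Type v} [Field F] [NonUnitalNonAssocCommRing A]
  [Module F A] [SMulCommClass F A A] [IsScalarTower F A A]

omit [IsScalarTower F A A] in
lemma mem_eigSp {a x : A} {l : F} : x ∈ eigSp F a l ↔ a * x = l • x := Iff.rfl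

omit [IsScalarTower F A A] in
lemma eig_disjoint {η : F} (hη0 : η ≠ 0) (hη1 : η ≠ 1) {a : A} (_ : IsAxis F η a) :
    Disjoint (eigSp F a 1 ⊔ eigSp F a 0) (eigSp F a η) := by
  rw [Submodule.disjoint_def]
  intro x hxN hxE
  obtain ⟨y, hy, z, hz, rfl⟩ := Submodule.mem_sup.mp hxN
  have h1 : a * (y + z) = y := by
    rw [mul_add, mem_eigSp.mp hy, mem_eigSp.mp hz, one_smul, zero_smul, add_zero]
  have h2 : a * (y + z) = η • (y + z) := mem_eigSp.mp hxE
  have h3 : y = η • (y + z) := h1.symm.trans h2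
  have h4 : a * y = y := by rw [mem_eigSp.mp hy, one_smul]
  have h5 : a * y = η • (η • (y + z)) := by
    conv_lhs => rw [h3]
    rw [mul_smul_comm, h2]
  have h6 : η • (y + z) = η • (η • (y + z)) := h3.symm.trans (h4.symm.trans h5)
  have h7 : (η - η * η) • (y + z) = 0 := by
    rw [sub_smul, ← smul_smul, ← h6, sub_self]
  have hne : η - η * η ≠ 0 := by
    rw [← mul_one_sub]
    exact mul_ne_zero hη0 (sub_ne_zero.mpr (Ne.symm hη1))
  exact (smul_eq_zero.mp h7).resolve_left hne

omit [IsScalarTower F A A] in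
lemma exists_miyamoto {η : F} (hchar : (2 : F) ≠ 0) (hη0 : η ≠ 0) (hη1 : η ≠ 1)
    {a : A} (ha : IsAxis F η a) :
    ∃ τ : A → A, IsMiyamoto F η a τ ∧
      ∀ b : A, ∃ c : F, a * b = c • a + (η * (2 : F)⁻¹) • (b - τ b) := by
  set N : Submodule F A := eigSp F a 1 ⊔ eigSp F a 0 with hN
  set E : Submodule F A := eigSp F a η with hE
  have hcompl : IsCompl N E :=
    ⟨eig_disjoint hη0 hη1 ha, codisjoint_iff.mpr ha.decomp⟩
  have hcompl' : IsCompl E N := hcompl.symm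
  let p : A →ₗ[F] E := Submodule.projectionOnto E N hcompl'
  let pE : A → A := fun x => (p x : A)
  have hpE_mem : ∀ x : A, pE x ∈ E := fun x => (p x).2
  have hpE_left : ∀ x ∈ E, pE x = x := by
    intro x hx
    exact congrArg Subtype.val (Submodule.linearProjOfIsCompl_apply_left hcompl' ⟨x, hx⟩)
  have hpE_right : ∀ x ∈ N, pE x = 0 := by
    intro x hx
    have h := Submodule.linearProjOfIsCompl_apply_right' hcompl' hx
    calc pE x = ((p x : E) : A) := rfl
      _ = ((0 : E) : A) := by rw [h]
      _ = 0 := rfl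
  have hpE_add : ∀ x y : A, pE (x + y) = pE x + pE y := by
    intro x y
    calc pE (x + y) = ((p (x + y) : E) : A) := rfl
      _ = ((p x + p y : E) : A) := by rw [map_add]
      _ = pE x + pE y := rfl
  have hpE_smul : ∀ (c : F) (x : A), pE (c • x) = c • pE x := by
    intro c x
    calc pE (c • x) = ((p (c • x) : E) : A) := rfl
      _ = ((c • p x : E) : A) := by rw [map_smul]
      _ = c • pE x := rfl
  have hpE_sub : ∀ x y : A, pE (x - y) = pE x - pE y := by
    intro x y
    calc pE (x - y) = ((p (x - y) : E) : A) := rfl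
      _ = ((p x - p y : E) : A) := by rw [map_sub]
      _ = pE x - pE y := rfl
  -- decomposition of an arbitrary element
  have hdec' : ∀ x : A, ∃ n ∈ N, ∃ e ∈ E, x = n + e ∧ pE x = e := by
    intro x
    have hx : x ∈ N ⊔ E := ha.decomp ▸ Submodule.mem_top
    obtain ⟨n, hn, e, he, hne⟩ := Submodule.mem_sup.mp hx
    have hpx : pE x = e := by
      rw [← hne, hpE_add, hpE_right n hn, hpE_left e he, zero_add]
    exact ⟨n, hn, e, he, hne.symm, hpx⟩
  -- products of N elements stay in N
  have mulNN : ∀ u ∈ N, ∀ v ∈ N, u * v ∈ N := by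
    intro u hu v hv
    obtain ⟨u1, hu1, u0, hu0, rfl⟩ := Submodule.mem_sup.mp hu
    obtain ⟨v1, hv1, v0, hv0, rfl⟩ := Submodule.mem_sup.mp hv
    have e10 : u1 * v0 = 0 := ha.f10 u1 hu1 v0 hv0
    have e01 : u0 * v1 = 0 := by rw [mul_comm]; exact ha.f10 v1 hv1 u0 hu0
    have hexp : (u1 + u0) * (v1 + v0) = u1 * v1 + u0 * v0 := by
      rw [add_mul, mul_add, mul_add, e10, e01]; abel
    rw [hexp]
    exact Submodule.add_mem _
      (Submodule.mem_sup_left (ha.f11 u1 hu1 v1 hv1))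
      (Submodule.mem_sup_right (ha.f00 u0 hu0 v0 hv0))
  let τ : A → A := fun x => x - (2 : F) • pE x
  have hτ_def : ∀ x : A, τ x = x - (2 : F) • pE x := fun x => rfl
  have hτN : ∀ x ∈ N, τ x = x := by
    intro x hx
    rw [hτ_def, hpE_right x hx, smul_zero, sub_zero]
  have hτE : ∀ x ∈ E, τ x = -x := by
    intro x hx
    rw [hτ_def, hpE_left x hx]
    module
  have hτ_mul : ∀ x y : A, τ (x * y) = τ x * τ y := by
    intro x y
    obtain ⟨n, hnN, e, heE, rfl, hex⟩ := hdec' x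
    obtain ⟨n', hn'N, e', he'E, rfl, hey⟩ := hdec' y
    have hP : n * n' + e * e' ∈ N :=
      Submodule.add_mem _ (mulNN n hnN n' hn'N) (ha.fee e heE e' he'E)
    have hQ : n * e' + e * n' ∈ E := by
      refine Submodule.add_mem _ (ha.fpe n hnN e' he'E) ?_
      rw [mul_comm]; exact ha.fpe n' hn'N e heE
    have hexp : (n + e) * (n' + e') = (n * n' + e * e') + (n * e' + e * n') := by
      rw [add_mul, mul_add, mul_add]; abel
    have hpxy : pE ((n + e) * (n' + e')) = n * e' + e * n' := by
      rw [hexp, hpE_add, hpE_right _ hP, hpE_left _ hQ, zero_add]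
    have r1 : n + e - (2 : F) • e = n - e := by module
    have r2 : n' + e' - (2 : F) • e' = n' - e' := by module
    rw [hτ_def ((n + e) * (n' + e')), hτ_def (n + e), hτ_def (n' + e'),
      hpxy, hex, hey, r1, r2, hexp, sub_mul, mul_sub, mul_sub]
    module
  have hτ_inv : Function.Involutive τ := by
    intro x
    have h1 : pE (τ x) = pE x - (2 : F) • pE x := by
      rw [hτ_def, hpE_sub, hpE_smul, hpE_left _ (hpE_mem x)]
    rw [hτ_def (τ x), h1, hτ_def x]
    module
  refine ⟨τ, ⟨hτN, hτE, ?_, ?_, hτ_mul, hτ_inv.bijective⟩, ?_⟩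
  · intro x y
    rw [hτ_def (x + y), hτ_def x, hτ_def y, hpE_add]
    module
  · intro c x
    rw [hτ_def (c • x), hτ_def x, hpE_smul]
    module
  · intro b
    obtain ⟨nb, hnb, eb, heb, hbd0, hpb⟩ := hdec' b
    obtain ⟨y, hy, z, hz, rfl⟩ := Submodule.mem_sup.mp hnb
    have hy' : y ∈ Submodule.span F {a} := ha.prim ▸ hy
    obtain ⟨c, hc⟩ := Submodule.mem_span_singleton.mp hy'
    refine ⟨c, ?_⟩
    have hτb : b - τ b = (2 : F) • pE b := by rw [hτ_def b]; abel
    have h2 : (η * (2 : F)⁻¹) • (b - τ b) = η • pE b := by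
      rw [hτb, smul_smul, mul_assoc, inv_mul_cancel₀ hchar, mul_one]
    rw [h2, hpb]
    calc a * b = a * (y + z + eb) := by rw [← hbd0]
      _ = a * y + a * z + a * eb := by rw [mul_add, mul_add]
      _ = c • a + η • eb := by
          rw [mem_eigSp.mp hy, mem_eigSp.mp hz, mem_eigSp.mp heb,
            one_smul, zero_smul, ← hc, add_zero]

end AuxProof

/-- A primitive axial algebra of Jordan type `η` generated by a
closed set `𝒜` of `η`-axes is spanned (as an `F`-vector space) by `𝒜`. -/
theorem spanned_by_closed_set_of_axes
    {F : Type u} {A : Type v} [Field F] [NonUnitalNonAssocCommRing A]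
    [Module F A] [SMulCommClass F A A] [IsScalarTower F A A]
    (hchar : (2 : F) ≠ 0) (η : F) (hη0 : η ≠ 0) (hη1 : η ≠ 1)
    (𝒜 : Set A) (h𝒜 : ∀ a ∈ 𝒜, IsAxis F η a)
    (hgen : NonUnitalAlgebra.adjoin F 𝒜 = ⊤)
    (hclosed : ∀ a ∈ 𝒜, ∀ b ∈ 𝒜, ∀ τ : A → A, IsMiyamoto F η b τ → τ a ∈ 𝒜) :
    Submodule.span F 𝒜 = ⊤ := by
  
  have key : ∀ a ∈ 𝒜, ∀ b ∈ 𝒜, a * b ∈ Submodule.span F 𝒜 := by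
    intro a ha' b hb'
    obtain ⟨τ, hτ, hform⟩ := exists_miyamoto hchar hη0 hη1 (h𝒜 a ha')
    obtain ⟨c, hc⟩ := hform b
    rw [hc]
    refine Submodule.add_mem _ (Submodule.smul_mem _ _ (Submodule.subset_span ha'))
      (Submodule.smul_mem _ _ (Submodule.sub_mem _ (Submodule.subset_span hb')
        (Submodule.subset_span (hclosed b hb' a ha' τ hτ))))
  have hmul : ∀ x y : A, x ∈ Submodule.span F 𝒜 → y ∈ Submodule.span F 𝒜 →
      x * y ∈ Submodule.span F 𝒜 := by
    intro x y hx hy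
    induction hx using Submodule.span_induction with
    | mem u hu =>
      induction hy using Submodule.span_induction with
      | mem v hv => exact key u hu v hv
      | zero => simp
      | add v w _ _ h1 h2 => rw [mul_add]; exact Submodule.add_mem _ h1 h2
      | smul c v _ h => rw [mul_smul_comm]; exact Submodule.smul_mem _ _ h
    | zero => simp
    | add u w _ _ h1 h2 => rw [add_mul]; exact Submodule.add_mem _ h1 h2
    | smul c u _ h => rw [smul_mul_assoc]; exact Submodule.smul_mem _ _ h
  have hle : NonUnitalAlgebra.adjoin F 𝒜 ≤
      (Submodule.span F 𝒜).toNonUnitalSubalgebra hmul :=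
    NonUnitalAlgebra.adjoin_le Submodule.subset_span
  rw [hgen] at hle
  exact eq_top_iff.mpr fun x _ => hle (by trivial)
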